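/- Let $Q : \mathbb{R}^d \to (0,1]$ be measurable with $Q^p$ integrable against $\varphi_{d-\sigma}$, where $\varphi_{d-\sigma}(\lambda) = C_{d,\sigma}|\lambda|^{-(d-\sigma)}$ and $0<\sigma<d$, and suppose $\varphi_{d-\sigma} Q^p$ has its convolution maximized at the origin in the sense that $\sup_{\lambda'} \int \varphi_{d-\sigma}(\lambda'-\lambda) Q^p(\lambda) d\lambda = \int \varphi_{d-\sigma}(\lambda) Q^p(\lambda) d\lambda$. Then for every $n \ge 1$, $\int_{(\mathbb{R}^d)^n} \Big[ \sum_{\pi \in \Sigma_n} \prod_{k=1}^n Q\Big(\sum_{j=1}^k \lambda_{\pi(j)}\Big) \Big]^p \prod_{i=1}^n \varphi_{d-\sigma}(\lambda_i)\, d\lambda_i \le (n!)^p \Big( \int_{\mathbb{R}^d} \varphi_{d-\sigma}(\lambda) Q^p(\lambda)\, d\lambda \Big)^n$. -/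

import Mathlib

open MeasureTheory

/-- The Riesz kernel `φ_{d-σ}(λ) = C_{d,σ} |λ|^{-(d-σ)}`. -/
noncomputable def rieszKernel (d : ℕ) (σ : ℝ) (l : EuclideanSpace ℝ (Fin d)) : ℝ :=
  Real.pi ^ (-(d : ℝ) / 2) * 2 ^ (-σ) * Real.Gamma (((d : ℝ) - σ) / 2) / Real.Gamma (σ / 2) *
    ‖l‖ ^ (σ - (d : ℝ))

section Aux

variable {d : ℕ} {σ : ℝ}

private lemma rieszConst_nonneg (hσ0 : 0 < σ) (hσd : σ < d) :
    0 ≤ Real.pi ^ (-(d : ℝ) / 2) * 2 ^ (-σ) * Real.Gamma (((d : ℝ) - σ) / 2) /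
      Real.Gamma (σ / 2) := by
  have h1 : 0 < Real.Gamma (((d : ℝ) - σ) / 2) := Real.Gamma_pos_of_pos (by linarith)
  have h2 : 0 < Real.Gamma (σ / 2) := Real.Gamma_pos_of_pos (by linarith)
  have h3 : (0 : ℝ) < Real.pi ^ (-(d : ℝ) / 2) := Real.rpow_pos_of_pos Real.pi_pos _
  have h4 : (0 : ℝ) < (2 : ℝ) ^ (-σ) := Real.rpow_pos_of_pos (by norm_num) _
  positivity

private lemma rieszKernel_nonneg (hσ0 : 0 < σ) (hσd : σ < d)
    (l : EuclideanSpace ℝ (Fin d)) : 0 ≤ rieszKernel d σ l :=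
  mul_nonneg (rieszConst_nonneg hσ0 hσd) (Real.rpow_nonneg (norm_nonneg _) _)

private lemma measurable_rieszKernel : Measurable (rieszKernel d σ) := by
  unfold rieszKernel; fun_prop

private lemma rieszKernel_sub_comm (a b : EuclideanSpace ℝ (Fin d)) :
    rieszKernel d σ (a - b) = rieszKernel d σ (b - a) := by
  unfold rieszKernel; rw [norm_sub_rev]

/-- local integrability of `‖x‖ ^ (σ - d)` on balls. -/
private lemma integrableOn_rpow_norm_closedBall (hd : 0 < d) (hσ0 : 0 < σ) (hσd : σ < d)
    (R : ℝ) :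
    IntegrableOn (fun x : EuclideanSpace ℝ (Fin d) => ‖x‖ ^ (σ - (d : ℝ)))
      (Metric.closedBall 0 R) := by
  set e : ℝ := σ - (d : ℝ) with he_def
  have he : e < 0 := by simp only [he_def]; linarith
  have hnn : ∀ x : EuclideanSpace ℝ (Fin d), 0 ≤ ‖x‖ ^ e :=
    fun x => Real.rpow_nonneg (norm_nonneg _) _
  have hmeas : Measurable fun x : EuclideanSpace ℝ (Fin d) => ‖x‖ ^ e := by fun_prop
  constructor
  · exact hmeas.aestronglyMeasurable
  · rw [hasFiniteIntegral_iff_ofReal (ae_of_all _ hnn)]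
    set μ : Measure (EuclideanSpace ℝ (Fin d)) := volume.restrict (Metric.closedBall 0 R)
    rw [lintegral_eq_lintegral_meas_le μ (ae_of_all _ hnn) hmeas.aemeasurable]
    have hsub : ∀ t : ℝ, 0 < t →
        {a : EuclideanSpace ℝ (Fin d) | t ≤ ‖a‖ ^ e} ⊆ Metric.closedBall 0 (t ^ e⁻¹) := by
      intro t ht a ha
      simp only [Set.mem_setOf_eq] at ha
      have hna : 0 < ‖a‖ := by
        rcases eq_or_lt_of_le (norm_nonneg a) with h | h
        · exfalso
          rw [← h, Real.zero_rpow he.ne] at ha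
          linarith
        · exact h
      rw [Metric.mem_closedBall, dist_zero_right]
      exact (Real.le_rpow_inv_iff_of_neg hna ht he).mpr ha
    calc ∫⁻ t in Set.Ioi (0:ℝ), μ {a | t ≤ ‖a‖ ^ e}
        ≤ ∫⁻ t in Set.Ioc (0:ℝ) 1 ∪ Set.Ioi 1, μ {a | t ≤ ‖a‖ ^ e} :=
          lintegral_mono_set Set.Ioi_subset_Ioc_union_Ioi
      _ ≤ (∫⁻ t in Set.Ioc (0:ℝ) 1, μ {a | t ≤ ‖a‖ ^ e}) +
            ∫⁻ t in Set.Ioi (1:ℝ), μ {a | t ≤ ‖a‖ ^ e} := lintegral_union_le _ _ _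
      _ < ⊤ := by
          apply ENNReal.add_lt_top.2
          constructor
          · calc ∫⁻ t in Set.Ioc (0:ℝ) 1, μ {a | t ≤ ‖a‖ ^ e}
                ≤ ∫⁻ _ in Set.Ioc (0:ℝ) 1, volume (Metric.closedBall (0:EuclideanSpace ℝ (Fin d)) R) := by
                  apply lintegral_mono
                  intro t
                  exact le_trans (measure_mono (Set.subset_univ _))
                    (le_of_eq (Measure.restrict_apply_univ _))
              _ = volume (Metric.closedBall (0:EuclideanSpace ℝ (Fin d)) R) * volume (Set.Ioc (0:ℝ) 1) := setLIntegral_const _ _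
              _ < ⊤ := by
                  apply ENNReal.mul_lt_top measure_closedBall_lt_top
                  simp [Real.volume_Ioc]
          · have hc : e⁻¹ * (d : ℝ) < -1 := by
              have : (d : ℝ) / e < -1 := by
                rw [div_lt_iff_of_neg he]
                have : (0:ℝ) < d := by exact_mod_cast hd
                linarith
              rwa [div_eq_mul_inv, mul_comm] at this
            calc ∫⁻ t in Set.Ioi (1:ℝ), μ {a | t ≤ ‖a‖ ^ e}
                ≤ ∫⁻ t in Set.Ioi (1:ℝ),
                    ENNReal.ofReal (t ^ (e⁻¹ * (d:ℝ))) * volume (Metric.ball (0:EuclideanSpace ℝ (Fin d)) 1) := by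
                  apply setLIntegral_mono' measurableSet_Ioi
                  intro t ht
                  have ht1 : (1:ℝ) < t := ht
                  have ht0 : (0:ℝ) < t := by linarith
                  calc μ {a | t ≤ ‖a‖ ^ e}
                      ≤ volume {a : EuclideanSpace ℝ (Fin d) | t ≤ ‖a‖ ^ e} :=
                        Measure.restrict_apply_le _ _
                    _ ≤ volume (Metric.closedBall 0 (t ^ e⁻¹)) := measure_mono (hsub t ht0)
                    _ = ENNReal.ofReal ((t ^ e⁻¹) ^ Module.finrank ℝ (EuclideanSpace ℝ (Fin d))) *
                          volume (Metric.ball (0:EuclideanSpace ℝ (Fin d)) 1) :=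
                        Measure.addHaar_closedBall _ _ (Real.rpow_nonneg ht0.le _)
                    _ = ENNReal.ofReal (t ^ (e⁻¹ * (d:ℝ))) * volume (Metric.ball (0:EuclideanSpace ℝ (Fin d)) 1) := by
                        rw [finrank_euclideanSpace_fin, ← Real.rpow_natCast (t ^ e⁻¹) d,
                          ← Real.rpow_mul ht0.le]
              _ = (∫⁻ t in Set.Ioi (1:ℝ), ENNReal.ofReal (t ^ (e⁻¹ * (d:ℝ)))) *
                    volume (Metric.ball (0:EuclideanSpace ℝ (Fin d)) 1) :=
                  lintegral_mul_const' _ _ measure_ball_lt_top.ne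
              _ < ⊤ := ENNReal.mul_lt_top
                  (integrableOn_Ioi_rpow_of_lt hc one_pos).setLIntegral_lt_top
                  measure_ball_lt_top

end Aux

section Aux2

variable {d : ℕ} {σ : ℝ} {p : ℕ} {Q : EuclideanSpace ℝ (Fin d) → ℝ}

private lemma integrable_shifted (hd : 0 < d) (hσ0 : 0 < σ) (hσd : σ < d)
    (hQm : Measurable Q) (hQ0 : ∀ x, 0 < Q x) (hQ1 : ∀ x, Q x ≤ 1)
    (hQint : Integrable (fun l => rieszKernel d σ l * Q l ^ p))
    (s : EuclideanSpace ℝ (Fin d)) :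
    Integrable (fun l => rieszKernel d σ (s - l) * Q l ^ p) := by
  have hQnn : ∀ x, 0 ≤ Q x ^ p := fun x => pow_nonneg (hQ0 x).le p
  have hQle1 : ∀ x, Q x ^ p ≤ 1 := fun x => pow_le_one₀ (hQ0 x).le (hQ1 x)
  set C : ℝ := Real.pi ^ (-(d : ℝ) / 2) * 2 ^ (-σ) * Real.Gamma (((d : ℝ) - σ) / 2) /
      Real.Gamma (σ / 2) with hC
  have hCnn : 0 ≤ C := rieszConst_nonneg hσ0 hσd
  set r0 : ℝ := 2 * ‖s‖ + 1 with hr0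
  set c : ℝ := (2/3 : ℝ) ^ (σ - (d:ℝ)) with hc
  have hcnn : 0 ≤ c := Real.rpow_nonneg (by norm_num) _
  have hφnn := rieszKernel_nonneg (d := d) hσ0 hσd
  -- integrability of the first piece of the dominating function
  have hG1 : Integrable ((Metric.closedBall s r0).indicator
      (fun l => rieszKernel d σ (s - l))) := by
    have h0 : Integrable ((Metric.closedBall (0:EuclideanSpace ℝ (Fin d)) r0).indicator
        (rieszKernel d σ)) := by
      rw [integrable_indicator_iff measurableSet_closedBall]
      unfold rieszKernel
      exact (integrableOn_rpow_norm_closedBall hd hσ0 hσd r0).const_mul _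
    apply (h0.comp_sub_left s).congr
    filter_upwards with l
    have hmem : s - l ∈ Metric.closedBall (0:EuclideanSpace ℝ (Fin d)) r0 ↔
        l ∈ Metric.closedBall s r0 := by
      rw [mem_closedBall_zero_iff, Metric.mem_closedBall, dist_eq_norm, norm_sub_rev]
    by_cases hl : l ∈ Metric.closedBall s r0
    · rw [Set.indicator_of_mem (hmem.mpr hl), Set.indicator_of_mem hl]
    · rw [Set.indicator_of_notMem (fun h => hl (hmem.mp h)), Set.indicator_of_notMem hl]
  have hG2 : Integrable (fun l => c * (rieszKernel d σ l * Q l ^ p)) := hQint.const_mul c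
  refine Integrable.mono' (hG1.add hG2) ?_ ?_
  · exact ((measurable_rieszKernel.comp (measurable_const.sub measurable_id)).mul
      (hQm.pow_const p)).aestronglyMeasurable
  · filter_upwards with l
    have hgnn : 0 ≤ rieszKernel d σ (s - l) * Q l ^ p :=
      mul_nonneg (hφnn _) (hQnn l)
    rw [Real.norm_of_nonneg hgnn]
    simp only [Pi.add_apply]
    by_cases hl : l ∈ Metric.closedBall s r0
    · rw [Set.indicator_of_mem hl]
      have h1 : rieszKernel d σ (s - l) * Q l ^ p ≤ rieszKernel d σ (s - l) := by
        nth_rewrite 2 [← mul_one (rieszKernel d σ (s - l))]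
        exact mul_le_mul_of_nonneg_left (hQle1 l) (hφnn _)
      have h2 : 0 ≤ c * (rieszKernel d σ l * Q l ^ p) :=
        mul_nonneg hcnn (mul_nonneg (hφnn _) (hQnn l))
      simpa using le_add_of_le_of_nonneg h1 h2
    · rw [Set.indicator_of_notMem hl]
      have hfar : r0 < ‖s - l‖ := by
        rw [Metric.mem_closedBall, not_le, dist_eq_norm] at hl
        rwa [norm_sub_rev]
      have t1 : ‖l‖ ≤ ‖s‖ + ‖s - l‖ := by
        calc ‖l‖ = ‖s - (s - l)‖ := by rw [sub_sub_cancel]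
          _ ≤ ‖s‖ + ‖s - l‖ := norm_sub_le _ _
      have t2 : ‖s - l‖ ≤ ‖s‖ + ‖l‖ := norm_sub_le _ _
      have hlpos : 0 < ‖l‖ := by simp only [hr0] at hfar; linarith
      have hkey : (2/3 : ℝ) * ‖l‖ ≤ ‖s - l‖ := by simp only [hr0] at hfar; linarith
      have hrpow : ‖s - l‖ ^ (σ - (d:ℝ)) ≤ ((2/3 : ℝ) * ‖l‖) ^ (σ - (d:ℝ)) :=
        Real.rpow_le_rpow_of_nonpos (by positivity) hkey (by linarith)
      have hmul : ((2/3 : ℝ) * ‖l‖) ^ (σ - (d:ℝ)) = c * ‖l‖ ^ (σ - (d:ℝ)) := by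
        rw [Real.mul_rpow (by norm_num) (norm_nonneg _), hc]
      have : rieszKernel d σ (s - l) * Q l ^ p ≤ c * (rieszKernel d σ l * Q l ^ p) := by
        unfold rieszKernel
        rw [← hC]
        calc C * ‖s - l‖ ^ (σ - (d:ℝ)) * Q l ^ p
            ≤ C * (c * ‖l‖ ^ (σ - (d:ℝ))) * Q l ^ p := by
              apply mul_le_mul_of_nonneg_right _ (hQnn l)
              apply mul_le_mul_of_nonneg_left _ hCnn
              rw [← hmul]; exact hrpow
          _ = c * (C * ‖l‖ ^ (σ - (d:ℝ)) * Q l ^ p) := by ring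
      have hind : (0:ℝ) ≤ 0 := le_refl 0
      calc rieszKernel d σ (s - l) * Q l ^ p
          ≤ c * (rieszKernel d σ l * Q l ^ p) := this
        _ ≤ 0 + c * (rieszKernel d σ l * Q l ^ p) := by simp
  -- done

private lemma key_conv (hd : 0 < d) (hσ0 : 0 < σ) (hσd : σ < d)
    (hQm : Measurable Q) (hQ0 : ∀ x, 0 < Q x) (hQ1 : ∀ x, Q x ≤ 1)
    (hQint : Integrable (fun l => rieszKernel d σ l * Q l ^ p))
    (hconv : ∀ l' : EuclideanSpace ℝ (Fin d),
      ∫ l, rieszKernel d σ (l' - l) * Q l ^ p ≤ ∫ l, rieszKernel d σ l * Q l ^ p)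
    (s : EuclideanSpace ℝ (Fin d)) :
    ∫⁻ x, ENNReal.ofReal (rieszKernel d σ x * Q (s + x) ^ p) ≤
      ENNReal.ofReal (∫ l, rieszKernel d σ l * Q l ^ p) := by
  have hφnn := rieszKernel_nonneg (d := d) hσ0 hσd
  have hQnn : ∀ x, 0 ≤ Q x ^ p := fun x => pow_nonneg (hQ0 x).le p
  have h1 : ∫⁻ x, ENNReal.ofReal (rieszKernel d σ x * Q (s + x) ^ p) =
      ∫⁻ l, ENNReal.ofReal (rieszKernel d σ (l - s) * Q l ^ p) := by
    rw [← lintegral_add_left_eq_self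
      (fun l => ENNReal.ofReal (rieszKernel d σ (l - s) * Q l ^ p)) s]
    congr 1 with x
    rw [add_sub_cancel_left]
  rw [h1]
  have h2 : ∀ l, rieszKernel d σ (l - s) = rieszKernel d σ (s - l) :=
    fun l => rieszKernel_sub_comm _ _
  simp_rw [h2]
  rw [← ofReal_integral_eq_lintegral_ofReal
    (integrable_shifted hd hσ0 hσd hQm hQ0 hQ1 hQint s)
    (ae_of_all _ fun l => mul_nonneg (hφnn _) (hQnn l))]
  exact ENNReal.ofReal_le_ofReal (hconv s)

end Aux2

section Aux3

private lemma sum_Iic_zero {M : Type*} [AddCommMonoid M] {n : ℕ} (x : Fin (n + 1) → M) :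
    ∑ j ∈ Finset.Iic (0 : Fin (n + 1)), x j = x 0 := by
  have h : Finset.Iic (0 : Fin (n + 1)) = {0} := by
    ext j; simp [Fin.le_zero_iff]
  rw [h, Finset.sum_singleton]

private lemma sum_Iic_succ {M : Type*} [AddCommMonoid M] {n : ℕ} (x : Fin (n + 1) → M)
    (k : Fin n) :
    ∑ j ∈ Finset.Iic k.succ, x j = x 0 + ∑ j ∈ Finset.Iic k, x j.succ := by
  have hset : Finset.Iic k.succ = insert 0 ((Finset.Iic k).map (Fin.succEmb n)) := by
    ext j
    simp only [Finset.mem_Iic, Finset.mem_insert, Finset.mem_map, Fin.succEmb,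
      Function.Embedding.coeFn_mk]
    constructor
    · intro hj
      rcases Fin.eq_zero_or_eq_succ j with h | ⟨i, rfl⟩
      · exact Or.inl h
      · exact Or.inr ⟨i, Fin.succ_le_succ_iff.mp hj, rfl⟩
    · rintro (rfl | ⟨i, hi, rfl⟩)
      · exact Fin.zero_le _
      · exact Fin.succ_le_succ_iff.mpr hi
  rw [hset, Finset.sum_insert (by simp [Fin.succ_ne_zero]), Finset.sum_map]
  rfl

end Aux3

section Aux4

variable {d : ℕ} {σ : ℝ} {p : ℕ} {Q : EuclideanSpace ℝ (Fin d) → ℝ}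

private lemma measurable_G {n : ℕ} (hQm : Measurable Q) (s : EuclideanSpace ℝ (Fin d)) :
    Measurable (fun x : Fin n → EuclideanSpace ℝ (Fin d) =>
      (∏ k, Q (s + ∑ j ∈ Finset.Iic k, x j) ^ p) * ∏ i, rieszKernel d σ (x i)) := by
  apply Measurable.mul
  · apply Finset.measurable_prod
    intro k _
    apply Measurable.pow_const
    exact hQm.comp (measurable_const.add
      (Finset.measurable_sum _ (fun j _ => measurable_pi_apply j)))
  · exact Finset.measurable_prod _ (fun i _ =>
      measurable_rieszKernel.comp (measurable_pi_apply i))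

private lemma key_ind (hd : 0 < d) (hσ0 : 0 < σ) (hσd : σ < d)
    (hQm : Measurable Q) (hQ0 : ∀ x, 0 < Q x) (hQ1 : ∀ x, Q x ≤ 1)
    (hQint : Integrable (fun l => rieszKernel d σ l * Q l ^ p))
    (hconv : ∀ l' : EuclideanSpace ℝ (Fin d),
      ∫ l, rieszKernel d σ (l' - l) * Q l ^ p ≤ ∫ l, rieszKernel d σ l * Q l ^ p) :
    ∀ (n : ℕ) (s : EuclideanSpace ℝ (Fin d)),
      ∫⁻ x : Fin n → EuclideanSpace ℝ (Fin d),
          ENNReal.ofReal ((∏ k, Q (s + ∑ j ∈ Finset.Iic k, x j) ^ p) *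
            ∏ i, rieszKernel d σ (x i)) ≤
        (ENNReal.ofReal (∫ l, rieszKernel d σ l * Q l ^ p)) ^ n := by
  have hφnn := rieszKernel_nonneg (d := d) hσ0 hσd
  have hQnn : ∀ x, 0 ≤ Q x ^ p := fun x => pow_nonneg (hQ0 x).le p
  intro n
  induction n with
  | zero =>
      intro s
      simp only [Finset.univ_eq_empty, Finset.prod_empty, one_mul, pow_zero]
      rw [lintegral_const, ENNReal.ofReal_one, one_mul]
      rw [volume_pi, Measure.pi_univ]
      simp
  | succ n ih =>
      intro s
      set I := ∫ l, rieszKernel d σ l * Q l ^ p with hI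
      set e := MeasurableEquiv.piFinSuccAbove (fun _ : Fin (n+1) => EuclideanSpace ℝ (Fin d)) 0 with he
      have hMP := measurePreserving_piFinSuccAbove (fun _ : Fin (n+1) => (volume : Measure (EuclideanSpace ℝ (Fin d)))) 0
      set g : (Fin (n+1) → EuclideanSpace ℝ (Fin d)) → ℝ := fun x =>
        (∏ k, Q (s + ∑ j ∈ Finset.Iic k, x j) ^ p) * ∏ i, rieszKernel d σ (x i) with hg
      have hgm : Measurable g := measurable_G hQm s
      have hpoint : ∀ (a : EuclideanSpace ℝ (Fin d)) (y : Fin n → EuclideanSpace ℝ (Fin d)),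
          g (e.symm (a, y)) = (rieszKernel d σ a * Q (s + a) ^ p) *
            ((∏ k, Q ((s + a) + ∑ j ∈ Finset.Iic k, y j) ^ p) *
              ∏ i, rieszKernel d σ (y i)) := by
        intro a y
        have hx : e.symm (a, y) = Fin.insertNth 0 a y := rfl
        set x : Fin (n+1) → EuclideanSpace ℝ (Fin d) := Fin.insertNth 0 a y with hxdef
        rw [hx]
        have hx0 : x 0 = a := by rw [hxdef]; exact Fin.insertNth_apply_same (α := fun _ => EuclideanSpace ℝ (Fin d)) 0 a y
        have hxs : ∀ j : Fin n, x j.succ = y j := by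
          intro j
          rw [hxdef, ← Fin.zero_succAbove j]
          exact Fin.insertNth_apply_succAbove (α := fun _ => EuclideanSpace ℝ (Fin d)) 0 a y j
        simp only [hg, Fin.prod_univ_succ, sum_Iic_succ, sum_Iic_zero, hx0, hxs, ← add_assoc]
        ring
      calc ∫⁻ x : Fin (n+1) → EuclideanSpace ℝ (Fin d), ENNReal.ofReal (g x)
          = ∫⁻ z : EuclideanSpace ℝ (Fin d) × (Fin n → EuclideanSpace ℝ (Fin d)), ENNReal.ofReal (g (e.symm z))
              ∂((volume : Measure (EuclideanSpace ℝ (Fin d))).prod (Measure.pi fun _ : Fin n => (volume : Measure (EuclideanSpace ℝ (Fin d))))) := by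
            rw [volume_pi, ← (hMP.symm e).map_eq, lintegral_map_equiv]
        _ = ∫⁻ a : EuclideanSpace ℝ (Fin d), ∫⁻ y : Fin n → EuclideanSpace ℝ (Fin d), ENNReal.ofReal (g (e.symm (a, y)))
              ∂(Measure.pi fun _ : Fin n => (volume : Measure (EuclideanSpace ℝ (Fin d)))) ∂(volume : Measure (EuclideanSpace ℝ (Fin d))) := by
            apply lintegral_prod
            exact ((hgm.comp e.symm.measurable).ennreal_ofReal).aemeasurable
        _ = ∫⁻ a : EuclideanSpace ℝ (Fin d), ENNReal.ofReal (rieszKernel d σ a * Q (s + a) ^ p) *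
              ∫⁻ y : Fin n → EuclideanSpace ℝ (Fin d), ENNReal.ofReal ((∏ k, Q ((s + a) + ∑ j ∈ Finset.Iic k, y j) ^ p) *
                ∏ i, rieszKernel d σ (y i))
                ∂(Measure.pi fun _ : Fin n => (volume : Measure (EuclideanSpace ℝ (Fin d)))) ∂(volume : Measure (EuclideanSpace ℝ (Fin d))) := by
            congr 1 with a
            rw [← lintegral_const_mul' _ _ ENNReal.ofReal_ne_top]
            congr 1 with y
            rw [hpoint a y, ENNReal.ofReal_mul (mul_nonneg (hφnn a) (hQnn _))]
        _ ≤ ∫⁻ a : EuclideanSpace ℝ (Fin d), ENNReal.ofReal (rieszKernel d σ a * Q (s + a) ^ p) *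
              (ENNReal.ofReal I) ^ n ∂(volume : Measure (EuclideanSpace ℝ (Fin d))) := by
            apply lintegral_mono
            intro a
            apply mul_le_mul_right
            rw [← volume_pi]
            exact ih (s + a)
        _ = (∫⁻ a : EuclideanSpace ℝ (Fin d), ENNReal.ofReal (rieszKernel d σ a * Q (s + a) ^ p)) *
              (ENNReal.ofReal I) ^ n :=
            lintegral_mul_const' _ _ (by simp [ENNReal.pow_ne_top, ENNReal.ofReal_ne_top])
        _ ≤ ENNReal.ofReal I * (ENNReal.ofReal I) ^ n := by
            apply mul_le_mul_left
            exact key_conv hd hσ0 hσd hQm hQ0 hQ1 hQint hconv s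
        _ = (ENNReal.ofReal I) ^ (n + 1) := by rw [pow_succ, mul_comm]

end Aux4

theorem stmt_15 (d : ℕ) (hd : 0 < d) (σ : ℝ) (hσ0 : 0 < σ) (hσd : σ < d)
    (p : ℕ) (hp : 1 ≤ p)
    (Q : EuclideanSpace ℝ (Fin d) → ℝ) (hQm : Measurable Q)
    (hQ0 : ∀ x, 0 < Q x) (hQ1 : ∀ x, Q x ≤ 1)
    (hQint : Integrable (fun l => rieszKernel d σ l * Q l ^ p))
    (hconv : ∀ l' : EuclideanSpace ℝ (Fin d),
      ∫ l, rieszKernel d σ (l' - l) * Q l ^ p ≤ ∫ l, rieszKernel d σ l * Q l ^ p) :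
    ∀ n : ℕ, 1 ≤ n →
      ∫ x : Fin n → EuclideanSpace ℝ (Fin d),
          (∑ π : Equiv.Perm (Fin n), ∏ k, Q (∑ j ∈ Finset.Iic k, x (π j))) ^ p *
            ∏ i, rieszKernel d σ (x i) ≤
        (n.factorial : ℝ) ^ p * (∫ l, rieszKernel d σ l * Q l ^ p) ^ n := by
  intro n _
  have hφnn := rieszKernel_nonneg (d := d) hσ0 hσd
  have hQnn : ∀ x, 0 ≤ Q x := fun x => (hQ0 x).le
  have hI0 : 0 ≤ ∫ l, rieszKernel d σ l * Q l ^ p :=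
    integral_nonneg fun l => mul_nonneg (hφnn l) (pow_nonneg (hQnn l) p)
  obtain ⟨m, rfl⟩ : ∃ m, p = m + 1 := ⟨p - 1, (Nat.succ_pred_eq_of_pos hp).symm⟩
  -- measurability facts
  have ham : ∀ π : Equiv.Perm (Fin n),
      Measurable (fun x : Fin n → EuclideanSpace ℝ (Fin d) =>
        ∏ k, Q (∑ j ∈ Finset.Iic k, x (π j))) := by
    intro π
    exact Finset.measurable_prod _ (fun k _ => hQm.comp
      (Finset.measurable_sum _ (fun j _ => measurable_pi_apply (π j))))
  have hWm : Measurable (fun x : Fin n → EuclideanSpace ℝ (Fin d) =>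
      ∏ i, rieszKernel d σ (x i)) :=
    Finset.measurable_prod _ (fun i _ => measurable_rieszKernel.comp (measurable_pi_apply i))
  have hWnn : ∀ x : Fin n → EuclideanSpace ℝ (Fin d), 0 ≤ ∏ i, rieszKernel d σ (x i) :=
    fun x => Finset.prod_nonneg fun i _ => hφnn (x i)
  have hann : ∀ (π : Equiv.Perm (Fin n)) (x : Fin n → EuclideanSpace ℝ (Fin d)),
      0 ≤ ∏ k, Q (∑ j ∈ Finset.Iic k, x (π j)) :=
    fun π x => Finset.prod_nonneg fun k _ => hQnn _
  have hFm : Measurable (fun x : Fin n → EuclideanSpace ℝ (Fin d) =>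
      (∑ π : Equiv.Perm (Fin n), ∏ k, Q (∑ j ∈ Finset.Iic k, x (π j))) ^ (m + 1) *
        ∏ i, rieszKernel d σ (x i)) :=
    ((Finset.measurable_sum _ (fun π _ => ham π)).pow_const _).mul hWm
  have hFnn : ∀ x : Fin n → EuclideanSpace ℝ (Fin d),
      0 ≤ (∑ π : Equiv.Perm (Fin n), ∏ k, Q (∑ j ∈ Finset.Iic k, x (π j))) ^ (m + 1) *
        ∏ i, rieszKernel d σ (x i) :=
    fun x => mul_nonneg (pow_nonneg (Finset.sum_nonneg fun π _ => hann π x) _) (hWnn x)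
  rw [integral_eq_lintegral_of_nonneg_ae (ae_of_all _ hFnn) hFm.aestronglyMeasurable]
  -- Jensen pointwise
  have hcard : ((Finset.univ : Finset (Equiv.Perm (Fin n))).card : ℝ) = (n.factorial : ℝ) := by
    rw [Finset.card_univ, Fintype.card_perm, Fintype.card_fin]
  have hfacpos : (0 : ℝ) < (n.factorial : ℝ) := by exact_mod_cast n.factorial_pos
  have hjen : ∀ x : Fin n → EuclideanSpace ℝ (Fin d),
      (∑ π : Equiv.Perm (Fin n), ∏ k, Q (∑ j ∈ Finset.Iic k, x (π j))) ^ (m + 1) *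
          ∏ i, rieszKernel d σ (x i) ≤
        (n.factorial : ℝ) ^ m * ∑ π : Equiv.Perm (Fin n),
          (∏ k, Q (∑ j ∈ Finset.Iic k, x (π j))) ^ (m + 1) * ∏ i, rieszKernel d σ (x i) := by
    intro x
    have h := pow_sum_div_card_le_sum_pow (s := (Finset.univ : Finset (Equiv.Perm (Fin n))))
      (f := fun π => ∏ k, Q (∑ j ∈ Finset.Iic k, x (π j))) (fun π _ => hann π x) m
    rw [div_le_iff₀ (by rw [hcard]; positivity)] at h
    rw [hcard] at h
    calc (∑ π : Equiv.Perm (Fin n), ∏ k, Q (∑ j ∈ Finset.Iic k, x (π j))) ^ (m + 1) *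
          ∏ i, rieszKernel d σ (x i)
        ≤ ((∑ π : Equiv.Perm (Fin n), (∏ k, Q (∑ j ∈ Finset.Iic k, x (π j))) ^ (m + 1)) *
            (n.factorial : ℝ) ^ m) * ∏ i, rieszKernel d σ (x i) :=
          mul_le_mul_of_nonneg_right h (hWnn x)
      _ = (n.factorial : ℝ) ^ m * ∑ π : Equiv.Perm (Fin n),
            (∏ k, Q (∑ j ∈ Finset.Iic k, x (π j))) ^ (m + 1) * ∏ i, rieszKernel d σ (x i) := by
          rw [← Finset.sum_mul]; ring
  -- permutation invariance
  have hperm : ∀ π : Equiv.Perm (Fin n),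
      ∫⁻ x : Fin n → EuclideanSpace ℝ (Fin d),
          ENNReal.ofReal ((∏ k, Q (∑ j ∈ Finset.Iic k, x (π j))) ^ (m + 1) *
            ∏ i, rieszKernel d σ (x i)) =
        ∫⁻ y : Fin n → EuclideanSpace ℝ (Fin d),
          ENNReal.ofReal ((∏ k, Q (∑ j ∈ Finset.Iic k, y j)) ^ (m + 1) *
            ∏ i, rieszKernel d σ (y i)) := by
    intro π
    have hMP := volume_measurePreserving_piCongrLeft
      (fun _ : Fin n => EuclideanSpace ℝ (Fin d)) (π : Fin n ≃ Fin n)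
    conv_lhs => rw [← hMP.map_eq]
    rw [lintegral_map_equiv]
    apply lintegral_congr
    intro y
    have hT : ∀ j : Fin n, (MeasurableEquiv.piCongrLeft
        (fun _ : Fin n => EuclideanSpace ℝ (Fin d)) (π : Fin n ≃ Fin n)) y (π j) = y j :=
      fun j => MeasurableEquiv.piCongrLeft_apply_apply (β := fun _ : Fin n => EuclideanSpace ℝ (Fin d)) (π : Fin n ≃ Fin n) y j
    congr 1
    have hprod2 : ∏ i, rieszKernel d σ ((MeasurableEquiv.piCongrLeft
        (fun _ : Fin n => EuclideanSpace ℝ (Fin d)) (π : Fin n ≃ Fin n)) y i) =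
        ∏ i, rieszKernel d σ (y i) := by
      rw [← Equiv.prod_comp (π : Fin n ≃ Fin n) (fun i => rieszKernel d σ
        ((MeasurableEquiv.piCongrLeft (fun _ : Fin n => EuclideanSpace ℝ (Fin d))
          (π : Fin n ≃ Fin n)) y i))]
      simp_rw [hT]
    simp_rw [hT, hprod2]
  -- key bound for the identity arrangement
  have hkey : ∫⁻ y : Fin n → EuclideanSpace ℝ (Fin d),
      ENNReal.ofReal ((∏ k, Q (∑ j ∈ Finset.Iic k, y j)) ^ (m + 1) *
        ∏ i, rieszKernel d σ (y i)) ≤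
      (ENNReal.ofReal (∫ l, rieszKernel d σ l * Q l ^ (m + 1))) ^ n := by
    have h := key_ind hd hσ0 hσd hQm hQ0 hQ1 hQint hconv n 0
    simp only [zero_add] at h
    simpa only [← Finset.prod_pow] using h
  -- assemble the lintegral bound
  have hchain : ∫⁻ x : Fin n → EuclideanSpace ℝ (Fin d),
      ENNReal.ofReal ((∑ π : Equiv.Perm (Fin n), ∏ k, Q (∑ j ∈ Finset.Iic k, x (π j))) ^ (m + 1) *
        ∏ i, rieszKernel d σ (x i)) ≤
      ENNReal.ofReal ((n.factorial : ℝ) ^ m) * ((n.factorial : ENNReal) *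
        (ENNReal.ofReal (∫ l, rieszKernel d σ l * Q l ^ (m + 1))) ^ n) := by
    calc ∫⁻ x : Fin n → EuclideanSpace ℝ (Fin d),
        ENNReal.ofReal ((∑ π : Equiv.Perm (Fin n), ∏ k, Q (∑ j ∈ Finset.Iic k, x (π j))) ^ (m + 1) *
          ∏ i, rieszKernel d σ (x i))
        ≤ ∫⁻ x : Fin n → EuclideanSpace ℝ (Fin d),
            ENNReal.ofReal ((n.factorial : ℝ) ^ m * ∑ π : Equiv.Perm (Fin n),
              (∏ k, Q (∑ j ∈ Finset.Iic k, x (π j))) ^ (m + 1) * ∏ i, rieszKernel d σ (x i)) :=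
          lintegral_mono fun x => ENNReal.ofReal_le_ofReal (hjen x)
      _ = ENNReal.ofReal ((n.factorial : ℝ) ^ m) * ∫⁻ x : Fin n → EuclideanSpace ℝ (Fin d),
            ENNReal.ofReal (∑ π : Equiv.Perm (Fin n),
              (∏ k, Q (∑ j ∈ Finset.Iic k, x (π j))) ^ (m + 1) * ∏ i, rieszKernel d σ (x i)) := by
          rw [← lintegral_const_mul' _ _ ENNReal.ofReal_ne_top]
          congr 1 with x
          rw [ENNReal.ofReal_mul (by positivity)]
      _ = ENNReal.ofReal ((n.factorial : ℝ) ^ m) * ∑ π : Equiv.Perm (Fin n),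
            ∫⁻ x : Fin n → EuclideanSpace ℝ (Fin d),
              ENNReal.ofReal ((∏ k, Q (∑ j ∈ Finset.Iic k, x (π j))) ^ (m + 1) *
                ∏ i, rieszKernel d σ (x i)) := by
          congr 1
          rw [← lintegral_finset_sum]
          · congr 1 with x
            rw [ENNReal.ofReal_sum_of_nonneg
              (fun π _ => mul_nonneg (pow_nonneg (hann π x) _) (hWnn x))]
          · intro π _
            exact (((ham π).pow_const _).mul hWm).ennreal_ofReal
      _ ≤ ENNReal.ofReal ((n.factorial : ℝ) ^ m) * ∑ _π : Equiv.Perm (Fin n),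
            (ENNReal.ofReal (∫ l, rieszKernel d σ l * Q l ^ (m + 1))) ^ n := by
          apply mul_le_mul_right
          apply Finset.sum_le_sum
          intro π _
          rw [hperm π]
          exact hkey
      _ = ENNReal.ofReal ((n.factorial : ℝ) ^ m) * ((n.factorial : ENNReal) *
            (ENNReal.ofReal (∫ l, rieszKernel d σ l * Q l ^ (m + 1))) ^ n) := by
          rw [Finset.sum_const, Finset.card_univ, Fintype.card_perm, Fintype.card_fin,
            nsmul_eq_mul]
  have hne : ENNReal.ofReal ((n.factorial : ℝ) ^ m) * ((n.factorial : ENNReal) *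
      (ENNReal.ofReal (∫ l, rieszKernel d σ l * Q l ^ (m + 1))) ^ n) ≠ ⊤ :=
    ENNReal.mul_ne_top ENNReal.ofReal_ne_top
      (ENNReal.mul_ne_top (ENNReal.natCast_ne_top _)
        (ENNReal.pow_ne_top ENNReal.ofReal_ne_top))
  calc (∫⁻ x : Fin n → EuclideanSpace ℝ (Fin d),
      ENNReal.ofReal ((∑ π : Equiv.Perm (Fin n), ∏ k, Q (∑ j ∈ Finset.Iic k, x (π j))) ^ (m + 1) *
        ∏ i, rieszKernel d σ (x i))).toReal
      ≤ (ENNReal.ofReal ((n.factorial : ℝ) ^ m) * ((n.factorial : ENNReal) *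
          (ENNReal.ofReal (∫ l, rieszKernel d σ l * Q l ^ (m + 1))) ^ n)).toReal :=
        ENNReal.toReal_mono hne hchain
    _ = (n.factorial : ℝ) ^ m * ((n.factorial : ℝ) *
          (∫ l, rieszKernel d σ l * Q l ^ (m + 1)) ^ n) := by
        rw [ENNReal.toReal_mul, ENNReal.toReal_mul, ENNReal.toReal_pow,
          ENNReal.toReal_ofReal (by positivity), ENNReal.toReal_natCast,
          ENNReal.toReal_ofReal hI0]
    _ = (n.factorial : ℝ) ^ (m + 1) * (∫ l, rieszKernel d σ l * Q l ^ (m + 1)) ^ n := by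
        ring
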